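/- Let P be a probability measure on ℝ whose cumulative distribution function F is continuous and strictly increasing, let τ ∈ (0,1), and let q = F^{-1}(τ) be the τ-quantile of P. Assume F is differentiable at q with F'(q) = f(q) > 0, and let ỹ ∈ ℝ with ỹ ≠ q. For t ∈ [0,1) let F_t(u) = (1−t)F(u) + t·1{ỹ ≤ u} be the CDF of the mixture P_t = (1−t)·P + t·δ_{ỹ}, and let q(t) = inf{u ∈ ℝ : F_t(u) ≥ τ}. Then t ↦ q(t) has a right derivative at t = 0 equal to ( 1{ỹ > q} + τ − 1 ) / f(q). In particular, the τ-quantile has efficient influence function ρ'_τ(Y − q)/f(q) where ρ'_τ(u) = 1{u ≥ 0} + τ − 1. -/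

import Mathlib

open MeasureTheory Set

/-- Influence function of the τ-quantile. Let `F` be the (continuous,
strictly increasing) CDF of `P`, `q` the τ-quantile (`F q = τ`), `F` differentiable at
`q` with density value `f(q) > 0`, and `ỹ ≠ q`. For the mixture CDF
`F_t(u) = (1−t)F(u) + t·1{ỹ ≤ u}`, the quantile `q(t) = inf{u : F_t(u) ≥ τ}` has right
derivative at `t = 0` equal to `(1{ỹ > q} + τ − 1)/f(q) = ρ'_τ(ỹ − q)/f(q)`. -/
theorem stmt_12 (P : Measure ℝ) [IsProbabilityMeasure P]
    (F : ℝ → ℝ) (hF_def : F = fun u => (P (Iic u)).toReal)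
    (hF_cont : Continuous F) (hF_mono : StrictMono F)
    (τ : ℝ) (hτ : τ ∈ Ioo (0:ℝ) 1)
    (q : ℝ) (hq : F q = τ)
    (fq : ℝ) (hfq : HasDerivAt F fq q) (hfq_pos : 0 < fq)
    (ytil : ℝ) (hy : ytil ≠ q) :
    HasDerivWithinAt
      (fun t : ℝ => sInf {u : ℝ | τ ≤ (1 - t) * F u + t * (if ytil ≤ u then 1 else 0)})
      (((if q < ytil then (1:ℝ) else 0) + τ - 1) / fq)
      (Ici 0) 0 := by
  set a : ℝ := if q < ytil then 0 else 1 with ha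
  set c : ℝ → ℝ := fun t => (τ - a * t) / (1 - t) with hc
  have hc0 : c 0 = τ := by simp [hc]
  set g : ℝ → ℝ := fun y => sInf {u | y ≤ F u} with hg
  have hgFu : ∀ u0 : ℝ, g (F u0) = u0 := by
    intro u0
    have hset : {u | F u0 ≤ F u} = Ici u0 := by
      ext u; simp [hF_mono.le_iff_le]
    simp only [hg, hset, csInf_Ici]
  have hIVT : ∀ ε : ℝ, 0 < ε → ∀ y ∈ Icc (F (q - ε)) (F (q + ε)),
      ∃ u ∈ Icc (q - ε) (q + ε), F u = y := by
    intro ε hε y hy'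
    obtain ⟨u, hu, hu'⟩ := intermediate_value_Icc (by linarith : q - ε ≤ q + ε)
      hF_cont.continuousOn hy'
    exact ⟨u, hu, hu'⟩
  have hFg : ∀ y ∈ Icc (F (q - 1)) (F (q + 1)), F (g y) = y := by
    intro y hy'
    obtain ⟨u, _, hu⟩ := hIVT 1 one_pos y hy'
    rw [← hu, hgFu]
  have hgq : g τ = q := by rw [← hq, hgFu]
  have hg_cont : ContinuousAt g τ := by
    unfold ContinuousAt
    rw [hgq, Metric.tendsto_nhds]
    intro ε hε
    set ε' := min (ε / 2) 1 with hε'def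
    have hε' : 0 < ε' := lt_min (by linarith) one_pos
    have h1 : F (q - ε') < τ := by rw [← hq]; exact hF_mono (by linarith)
    have h2 : τ < F (q + ε') := by rw [← hq]; exact hF_mono (by linarith)
    filter_upwards [Ioo_mem_nhds h1 h2] with y hy'
    obtain ⟨u, hu, huy⟩ := hIVT ε' hε' y ⟨hy'.1.le, hy'.2.le⟩
    rw [← huy, hgFu]
    have hhalf : ε' ≤ ε / 2 := min_le_left _ _
    rw [Real.dist_eq, abs_lt]
    constructor
    · linarith [hu.1]
    · linarith [hu.2]
  have hg_deriv : HasDerivAt g fq⁻¹ τ := by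
    apply HasDerivAt.of_local_left_inverse hg_cont (by rw [hgq]; exact hfq) hfq_pos.ne'
    have h1 : F (q - 1) < τ := by rw [← hq]; exact hF_mono (by linarith)
    have h2 : τ < F (q + 1) := by rw [← hq]; exact hF_mono (by linarith)
    filter_upwards [Ioo_mem_nhds h1 h2] with y hy'
    exact hFg y ⟨hy'.1.le, hy'.2.le⟩
  have hc_deriv : HasDerivAt c (τ - a) 0 := by
    have h1 : HasDerivAt (fun t : ℝ => τ - a * t) (-a) 0 := by
      simpa using ((hasDerivAt_id (0:ℝ)).const_mul a).const_sub τ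
    have h2 : HasDerivAt (fun t : ℝ => 1 - t) (-1) 0 := by
      simpa using (hasDerivAt_id (0:ℝ)).const_sub 1
    have h3 := h1.div h2 (by norm_num)
    exact h3.congr_deriv (by ring)
  have hcomp : HasDerivAt (g ∘ c) (fq⁻¹ * (τ - a)) 0 := by
    have hg' : HasDerivAt g fq⁻¹ (c 0) := by rw [hc0]; exact hg_deriv
    exact HasDerivAt.comp (0:ℝ) hg' hc_deriv
  have hy' : q < ytil ∨ ytil < q := hy.symm.lt_or_gt
  have key : ∀ t : ℝ, 0 ≤ t → t < 1 →
      c t ∈ Ioo (F (q - 1)) (F (q + 1)) →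
      ((q < ytil → c t < F ytil) ∧ (ytil < q → F ytil < c t)) →
      sInf {u : ℝ | τ ≤ (1 - t) * F u + t * (if ytil ≤ u then 1 else 0)} = g (c t) := by
    intro t ht0 ht1 hct hsgn
    have h1t : (0:ℝ) < 1 - t := by linarith
    set that := g (c t) with hut
    have hFut : F that = c t := hFg _ ⟨hct.1.le, hct.2.le⟩
    have hkey : (1 - t) * c t = τ - a * t := by
      rw [hc]; field_simp
    have hset : {u : ℝ | τ ≤ (1 - t) * F u + t * (if ytil ≤ u then 1 else 0)} = Ici that := by
      ext u
      simp only [mem_setOf_eq, mem_Ici]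
      rcases hy' with hqy | hyq
      · have ha0 : a = 0 := by rw [ha, if_pos hqy]
        have hτut : (1 - t) * F that = τ := by rw [hFut, hkey, ha0]; ring
        have huty : that < ytil := by
          have hlt : F that < F ytil := by rw [hFut]; exact hsgn.1 hqy
          exact hF_mono.lt_iff_lt.mp hlt
        constructor
        · intro hu
          by_contra h
          push_neg at h
          have hχ : ¬ ytil ≤ u := by linarith
          rw [if_neg hχ] at hu
          have hlt : (1 - t) * F u < (1 - t) * F that :=
            mul_lt_mul_of_pos_left (hF_mono h) h1t
          linarith
        · intro hu
          have hle : (1 - t) * F that ≤ (1 - t) * F u :=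
            mul_le_mul_of_nonneg_left (hF_mono.monotone hu) h1t.le
          by_cases hχ : ytil ≤ u
          · rw [if_pos hχ]; linarith
          · rw [if_neg hχ]; linarith
      · have ha1 : a = 1 := by rw [ha, if_neg (not_lt.mpr hyq.le)]
        have hτut : (1 - t) * F that = τ - t := by rw [hFut, hkey, ha1]; ring
        have huty : ytil < that := by
          have hlt : F ytil < F that := by rw [hFut]; exact hsgn.2 hyq
          exact hF_mono.lt_iff_lt.mp hlt
        constructor
        · intro hu
          by_contra h
          push_neg at h
          have hlt : (1 - t) * F u < (1 - t) * F that :=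
            mul_lt_mul_of_pos_left (hF_mono h) h1t
          by_cases hχ : ytil ≤ u
          · rw [if_pos hχ] at hu; linarith
          · rw [if_neg hχ] at hu; linarith
        · intro hu
          have hχ : ytil ≤ u := by linarith
          rw [if_pos hχ]
          have hle : (1 - t) * F that ≤ (1 - t) * F u :=
            mul_le_mul_of_nonneg_left (hF_mono.monotone hu) h1t.le
          linarith
    rw [hset, csInf_Ici]
  have hc_cont : ContinuousAt c 0 := hc_deriv.continuousAt
  have hτ1 : F (q - 1) < τ := by rw [← hq]; exact hF_mono (by linarith)
  have hτ2 : τ < F (q + 1) := by rw [← hq]; exact hF_mono (by linarith)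
  have hE1 : ∀ᶠ t in nhdsWithin 0 (Ici (0:ℝ)), c t ∈ Ioo (F (q - 1)) (F (q + 1)) := by
    apply Filter.Eventually.filter_mono nhdsWithin_le_nhds
    exact hc_cont (show Ioo (F (q - 1)) (F (q + 1)) ∈ nhds (c 0) by
      rw [hc0]; exact Ioo_mem_nhds hτ1 hτ2)
  have hE2 : ∀ᶠ t in nhdsWithin 0 (Ici (0:ℝ)), t < 1 :=
    Filter.Eventually.filter_mono nhdsWithin_le_nhds (eventually_lt_nhds one_pos)
  have hE3 : ∀ᶠ t in nhdsWithin 0 (Ici (0:ℝ)), (0:ℝ) ≤ t :=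
    eventually_mem_nhdsWithin
  have hE4 : ∀ᶠ t in nhdsWithin 0 (Ici (0:ℝ)),
      ((q < ytil → c t < F ytil) ∧ (ytil < q → F ytil < c t)) := by
    apply Filter.Eventually.filter_mono nhdsWithin_le_nhds
    rcases hy' with hqy | hyq
    · have hτy : τ < F ytil := by rw [← hq]; exact hF_mono hqy
      have hev : c ⁻¹' Iio (F ytil) ∈ nhds (0:ℝ) :=
        hc_cont (show Iio (F ytil) ∈ nhds (c 0) by rw [hc0]; exact Iio_mem_nhds hτy)
      filter_upwards [hev] with t ht
      exact ⟨fun _ => ht, fun h => (lt_asymm h hqy).elim⟩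
    · have hτy : F ytil < τ := by rw [← hq]; exact hF_mono hyq
      have hev : c ⁻¹' Ioi (F ytil) ∈ nhds (0:ℝ) :=
        hc_cont (show Ioi (F ytil) ∈ nhds (c 0) by rw [hc0]; exact Ioi_mem_nhds hτy)
      filter_upwards [hev] with t ht
      exact ⟨fun h => (lt_asymm h hyq).elim, fun _ => ht⟩
  have hval : ((if q < ytil then (1:ℝ) else 0) + τ - 1) / fq = fq⁻¹ * (τ - a) := by
    by_cases hqy : q < ytil
    · simp only [if_pos hqy, ha]
      rw [div_eq_inv_mul]; ring
    · simp only [if_neg hqy, ha]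
      rw [div_eq_inv_mul]; ring
  rw [hval]
  refine HasDerivWithinAt.congr_of_eventuallyEq hcomp.hasDerivWithinAt ?_ ?_
  · filter_upwards [hE1, hE2, hE3, hE4] with t ht1 ht2 ht3 ht4
    exact key t ht3 ht2 ht1 ht4
  · refine key 0 le_rfl one_pos ?_ ?_
    · rw [hc0]; exact ⟨hτ1, hτ2⟩
    · rw [hc0]
      constructor
      · intro h; rw [← hq]; exact hF_mono h
      · intro h; rw [← hq]; exact hF_mono h
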